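/- The prefix table is a sound approximation of all future parse tables: for all u ∈ Σ*, T^<(u) ⊑ T^⊓(u), where T^⊓(u) = ⨅_{v ∈ Σ*} T(uv). In particular, if T^<(u)_{ij} = m (or f), then for every extension v, T(uv)_{ij} = m (respectively f). -/

import Mathlib

/-- GTDPL rule right-hand sides: `ε`, failure `f`, a terminal symbol, or a
ternary expression `A_x[A_y,A_z]` (nonterminals are rule indices). -/
inductive GExpr (σ ν : Type) : Type
  | eps : GExpr σ ν
  | fail : GExpr σ ν
  | sym (a : σ) : GExpr σ ν
  | tern (x y z : ν) : GExpr σ ν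

/-- Parse results: a number of consumed symbols, or failure `f`. -/
inductive Res : Type
  | ok (m : ℕ) : Res
  | fail : Res

/-- Tables with entries in `Res_⊥` (`none` is the bottom element `⊥`),
indexed by a rule index and a column. -/
abbrev Table (ν : Type) := ν → ℕ → Option Res

/-- The pointwise table order, with the flat order (`⊥` below everything) on entries. -/
def tableLE {ν : Type} (T T' : Table ν) : Prop :=
  ∀ i j, T i j = none ∨ T i j = T' i j

/-- The bottom table `⊥`. -/
def botTable {ν : Type} : Table ν := fun _ _ => none

/-- One application of the parse-table operator `F^u` of a program `rule` on
input `u`; columns at offsets `≥ |u|` carry the end marker `hash` (modelling the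
infinite padding `w = u·#^ω`), which matches no symbol of any rule since `# ∉ Σ`. -/
def step {σ ν : Type} [DecidableEq σ] (rule : ν → GExpr σ ν) (hash : σ)
    (u : List σ) (T : Table ν) : Table ν :=
  fun i j =>
    match rule i with
    | .eps => some (.ok 0)
    | .fail => some .fail
    | .sym a => if u.getD j hash = a then some (.ok 1) else some .fail
    | .tern x y z =>
      match T x j with
      | some (.ok m) =>
        match T y (j + m) with
        | some (.ok m') => some (.ok (m + m'))
        | some .fail => some .fail
        | none => none
      | some .fail => T z j
      | none => none

/-- The restricted operator `F^{(u)} = F^u` applied only at columns `j < |u|`,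
leaving all other entries unchanged. -/
def stepPrefix {σ ν : Type} [DecidableEq σ] (rule : ν → GExpr σ ν) (hash : σ)
    (u : List σ) (T : Table ν) : Table ν :=
  fun i j => if j < u.length then step rule hash u T i j else T i j

/-- `T` is the least fixed point `⨆ₙ Fⁿ(⊥)` of the continuous table operator `F`,
characterized entrywise: an entry is resolved in `T` iff it is resolved (with the
same value) at some finite stage of the iteration from `⊥`. -/
def IsLfp {ν : Type} (F : Table ν → Table ν) (T : Table ν) : Prop :=
  ∀ i j r, T i j = some r ↔ ∃ n, F^[n] botTable i j = some r

/-- The dynamic dependency map `D^T`: for a complex rule `A_i ← A_x[A_y,A_z]`,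
the entry `(i,j)` depends on `(y, j+m)` if `T x j = m`, on `(z, j)` if
`T x j = f`, and is undefined otherwise (also for simple rules). -/
def dynDep {σ ν : Type} (rule : ν → GExpr σ ν) (T : Table ν) (i : ν) (j : ℕ) :
    Option (ν × ℕ) :=
  match rule i with
  | .tern x y z =>
    match T x j with
    | some (.ok m) => some (y, j + m)
    | some .fail => some (z, j)
    | none => none
  | _ => none

/-- `T ⊑ T'` in the "resolved entries agree" sense. -/
def tleq {ν : Type} (T T' : Table ν) : Prop :=
  ∀ i j r, T i j = some r → T' i j = some r

lemma tleq_bot {ν : Type} (T : Table ν) : tleq botTable T := by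
  intro i j r h; simp [botTable] at h

lemma step_mono {σ ν : Type} [DecidableEq σ] (rule : ν → GExpr σ ν) (hash : σ)
    (w : List σ) {T T' : Table ν} (h : tleq T T') :
    tleq (step rule hash w T) (step rule hash w T') := by
  intro i j r hr
  simp only [step] at hr ⊢
  cases hrul : rule i with
  | eps => simpa [hrul] using (by simpa [hrul] using hr)
  | fail => simpa [hrul] using (by simpa [hrul] using hr)
  | sym a => simpa [hrul] using (by simpa [hrul] using hr)
  | tern x y z =>
    simp only [hrul] at hr ⊢
    cases hx : T x j with
    | none => simp [hx] at hr
    | some rx =>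
      cases rx with
      | ok m =>
        rw [h x j _ hx]
        rw [hx] at hr
        dsimp only at hr ⊢
        cases hy : T y (j + m) with
        | none => simp [hy] at hr
        | some ry => rw [h y (j+m) _ hy]; rw [hy] at hr; exact hr
      | fail =>
        rw [h x j _ hx]
        rw [hx] at hr
        dsimp only at hr ⊢
        exact h z j _ hr

lemma iter_chain {σ ν : Type} [DecidableEq σ] (rule : ν → GExpr σ ν) (hash : σ)
    (w : List σ) :
    ∀ {n m : ℕ}, n ≤ m →
      tleq ((step rule hash w)^[n] botTable) ((step rule hash w)^[m] botTable) := by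
  have succ : ∀ n, tleq ((step rule hash w)^[n] botTable)
      ((step rule hash w)^[n+1] botTable) := by
    intro n
    induction n with
    | zero => exact tleq_bot _
    | succ k ih =>
      rw [Function.iterate_succ', Function.iterate_succ']
      exact step_mono rule hash w ih
  intro n m hnm
  induction hnm with
  | refl => intro i j r h; exact h
  | step _ ih => intro i j r h; exact succ _ _ _ _ (ih i j r h)

lemma lfp_closed {σ ν : Type} [DecidableEq σ] (rule : ν → GExpr σ ν) (hash : σ)
    (w : List σ) (T : Table ν) (hT : IsLfp (step rule hash w) T) :
    tleq (step rule hash w T) T := by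
  intro i j r hr
  simp only [step] at hr
  cases hrul : rule i with
  | eps =>
    refine (hT i j r).mpr ⟨1, ?_⟩
    simp only [hrul] at hr
    simp [step, hrul, ← hr]
  | fail =>
    refine (hT i j r).mpr ⟨1, ?_⟩
    simp only [hrul] at hr
    simp [step, hrul, ← hr]
  | sym a =>
    refine (hT i j r).mpr ⟨1, ?_⟩
    simp only [hrul] at hr
    simpa [step, hrul] using hr
  | tern x y z =>
    simp only [hrul] at hr
    cases hx : T x j with
    | none => simp [hx] at hr
    | some rx =>
      rw [hx] at hr
      cases rx with
      | ok m =>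
        dsimp only at hr
        cases hy : T y (j + m) with
        | none => simp [hy] at hr
        | some ry =>
          rw [hy] at hr
          obtain ⟨n1, hn1⟩ := (hT x j _).mp hx
          obtain ⟨n2, hn2⟩ := (hT y (j+m) _).mp hy
          set N := max n1 n2
          have hx' := iter_chain rule hash w (le_max_left n1 n2) x j _ hn1
          have hy' := iter_chain rule hash w (le_max_right n1 n2) y (j+m) _ hn2
          refine (hT i j r).mpr ⟨N + 1, ?_⟩
          rw [Function.iterate_succ']
          simp only [Function.comp_apply, step, hrul, N, hx', hy']
          cases ry with
          | ok m' => simpa using hr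
          | fail => simpa using hr
      | fail =>
        dsimp only at hr
        obtain ⟨n1, hn1⟩ := (hT x j _).mp hx
        obtain ⟨n2, hn2⟩ := (hT z j r).mp hr
        set N := max n1 n2
        have hx' := iter_chain rule hash w (le_max_left n1 n2) x j _ hn1
        have hz' := iter_chain rule hash w (le_max_right n1 n2) z j _ hn2
        refine (hT i j r).mpr ⟨N + 1, ?_⟩
        rw [Function.iterate_succ']
        simp only [Function.comp_apply, step, hrul, N, hx', hz']

/-- Approximation: the prefix table `T^<(u) = lfp F^{(u)}` is a sound
approximation of all future parse tables, i.e. `T^<(u) ⊑ T^⊓(u) = ⨅_v T(uv)`: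
`T^<(u)` is below the parse table `T(uv)` of every extension `uv` of `u`.
In particular, if `T^<(u)_{ij} = m` (or `f`), then `T(uv)_{ij} = m`
(respectively `f`) for every extension `v`. -/
theorem prefixTable_approximates {σ ν : Type} [DecidableEq σ]
    (rule : ν → GExpr σ ν) (hash : σ)
    (hrule : ∀ i a, rule i = .sym a → a ≠ hash)
    (u : List σ) (hu : hash ∉ u)
    (Tp : Table ν) (hTp : IsLfp (stepPrefix rule hash u) Tp) :
    ∀ v : List σ, hash ∉ v →
      ∀ Tuv : Table ν, IsLfp (step rule hash (u ++ v)) Tuv →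
        tableLE Tp Tuv := by
  intro v _hv Tuv hTuv
  have hstep_eq : ∀ (T : Table ν) i j, j < u.length →
      step rule hash u T i j = step rule hash (u ++ v) T i j := by
    intro T i j hj
    simp only [step]
    cases rule i with
    | sym a => rw [List.getD_append _ _ _ _ hj]
    | _ => rfl
  have key : ∀ n, tleq ((stepPrefix rule hash u)^[n] botTable) Tuv := by
    intro n
    induction n with
    | zero => exact tleq_bot _
    | succ k ih =>
      rw [Function.iterate_succ']
      intro i j r hr
      simp only [Function.comp_apply, stepPrefix] at hr
      by_cases hj : j < u.length
      · rw [if_pos hj, hstep_eq _ i j hj] at hr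
        exact lfp_closed rule hash (u ++ v) Tuv hTuv i j r
          (step_mono rule hash (u ++ v) ih i j r hr)
      · rw [if_neg hj] at hr
        exact ih i j r hr
  intro i j
  cases h : Tp i j with
  | none => exact Or.inl rfl
  | some r =>
    obtain ⟨n, hn⟩ := (hTp i j r).mp h
    exact Or.inr ((key n i j r hn).symm)
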